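/- Let k > 1 be an integer. Then there exist constants C_k, c_k > 0 and γ_k ≥ 0, depending only on k, such that for every finite set A ⊆ ℝ with |A| ≥ 2 there are sets B″ ⊆ B ⊆ A, a real number t with 1 ≤ t ≤ |B|, and the set P = {x ∈ B − B : t ≤ r_{B−B}(x) < 2t}, satisfying: (i) |B| ≥ c_k|A| and |B″| ≥ c_k·|B|·(log|A|)^{−γ_k}; (ii) c_k·(log|A|)^{−γ_k}·|P|·t^k ≤ E_k⁺(B) ≤ C_k·(log|A|)^{γ_k}·|P|·t^k; (iii) for every b ∈ B″, c_k·(log|A|)^{−γ_k}·|P|·t·|A|^{−1} ≤ r_{P+B}(b) ≤ C_k·(log|A|)^{γ_k}·|P|·t·|A|^{−1}. -/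

import Mathlib

set_option maxHeartbeats 4000000

open Finset Pointwise

/-- `rsub A B x = #{(a,b) ∈ A × B : a − b = x}`. -/
noncomputable def rsub (A B : Finset ℝ) (x : ℝ) : ℕ :=
  ((A ×ˢ B).filter (fun p => p.1 - p.2 = x)).card

/-- `radd P B x = #{(p,b) ∈ P × B : p + b = x}`. -/
noncomputable def radd (P B : Finset ℝ) (x : ℝ) : ℕ :=
  ((P ×ˢ B).filter (fun p => p.1 + p.2 = x)).card

/-- The `k`-th moment additive energy `E_k⁺(A) = ∑ₓ r_{A−A}(x)^k`. -/
noncomputable def Ek (k : ℕ) (A : Finset ℝ) : ℕ :=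
  ∑ x ∈ A - A, rsub A A x ^ k

/-- The set of popular differences `P = {x ∈ B − B : t ≤ r_{B−B}(x) < 2t}`. -/
noncomputable def popDiff (B : Finset ℝ) (t : ℝ) : Finset ℝ :=
  (B - B).filter (fun x => t ≤ (rsub B B x : ℝ) ∧ (rsub B B x : ℝ) < 2 * t)

lemma rsub_eq_sum (A B : Finset ℝ) (x : ℝ) :
    rsub A B x = ∑ a ∈ A, if a - x ∈ B then 1 else 0 := by
  classical
  rw [rsub, Finset.card_filter, Finset.sum_product]
  refine Finset.sum_congr rfl (fun a _ => ?_)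
  simp only []
  have h1 : ∀ b : ℝ, (a - b = x) = (b = a - x) := by
    intro b; apply propext; constructor <;> intro h <;> linarith
  simp_rw [h1]
  rw [Finset.sum_ite_eq' B (a - x) (fun _ => 1)]

lemma radd_eq_sum (P B : Finset ℝ) (b : ℝ) :
    radd P B b = ∑ p ∈ P, if b - p ∈ B then 1 else 0 := by
  classical
  rw [radd, Finset.card_filter, Finset.sum_product]
  refine Finset.sum_congr rfl (fun p _ => ?_)
  simp only []
  have h1 : ∀ y : ℝ, (p + y = b) = (y = b - p) := by
    intro y; apply propext; constructor <;> intro h <;> linarith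
  simp_rw [h1]
  rw [Finset.sum_ite_eq' B (b - p) (fun _ => 1)]

lemma sum_radd (P B S : Finset ℝ) :
    ∑ b ∈ S, radd P B b = ∑ p ∈ P, rsub S B p := by
  classical
  simp only [radd_eq_sum, rsub_eq_sum]
  rw [Finset.sum_comm]

lemma one_le_rsub {B : Finset ℝ} {x : ℝ} (hx : x ∈ B - B) : 1 ≤ rsub B B x := by
  classical
  rw [Finset.mem_sub] at hx
  obtain ⟨a, ha, b, hb, rfl⟩ := hx
  rw [rsub, Nat.one_le_iff_ne_zero, ← Nat.pos_iff_ne_zero, Finset.card_pos]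
  exact ⟨(a, b), by simp [ha, hb]⟩

lemma rsub_le_card (A B : Finset ℝ) (x : ℝ) : rsub A B x ≤ A.card := by
  classical
  apply Finset.card_le_card_of_injOn Prod.fst
  · intro p hp
    simp only [Finset.mem_coe, Finset.mem_filter, Finset.mem_product] at hp
    exact hp.1.1
  · intro p hp q hq h
    simp only [Finset.mem_filter, Finset.mem_product, Finset.mem_coe] at hp hq
    have : p.2 = q.2 := by
      have := hp.2; have := hq.2
      cases p; cases q; simp_all; linarith
    cases p; cases q; simp_all

lemma sum_rsub_self (B : Finset ℝ) :
    ∑ x ∈ B - B, rsub B B x = B.card * B.card := by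
  classical
  rw [← Finset.card_product]
  have := Finset.card_eq_sum_card_fiberwise (f := fun p : ℝ × ℝ => p.1 - p.2)
    (s := B ×ˢ B) (t := B - B) (fun p hp => by
      rw [Finset.mem_coe, Finset.mem_product] at hp
      exact Finset.sub_mem_sub hp.1 hp.2)
  rw [this]
  rfl

lemma rsub_eq_zero {B : Finset ℝ} {x : ℝ} (hx : x ∉ B - B) : rsub B B x = 0 := by
  classical
  rw [rsub, Finset.card_eq_zero, Finset.filter_eq_empty_iff]
  rintro ⟨a, b⟩ hp h
  rw [Finset.mem_product] at hp
  exact hx (h ▸ Finset.sub_mem_sub hp.1 hp.2)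

lemma card_sq_le_Ek {k : ℕ} (hk : k ≠ 0) (B : Finset ℝ) :
    B.card * B.card ≤ Ek k B := by
  rw [← sum_rsub_self, Ek]
  exact Finset.sum_le_sum (fun x _ => Nat.le_self_pow hk _)

lemma Ek_le_card {k : ℕ} (hk : 1 ≤ k) (B : Finset ℝ) :
    Ek k B ≤ B.card ^ (k + 1) := by
  have : Ek k B ≤ ∑ x ∈ B - B, B.card ^ (k-1) * rsub B B x := by
    apply Finset.sum_le_sum
    intro x _
    have h1 : rsub B B x ^ k = rsub B B x ^ (k-1) * rsub B B x := by
      rw [← pow_succ]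
      congr 1
      omega
    rw [h1]
    exact Nat.mul_le_mul_right _ (Nat.pow_le_pow_left (rsub_le_card B B x) _)
  rw [← Finset.mul_sum, sum_rsub_self] at this
  calc Ek k B ≤ B.card ^ (k-1) * (B.card * B.card) := this
    _ = B.card ^ ((k-1) + 2) := by rw [pow_add]; ring
    _ = B.card ^ (k+1) := by congr 1; omega

-- dyadic fiber
lemma popDiff_eq_fiber (B : Finset ℝ) (j : ℕ) :
    popDiff B ((2^j : ℕ) : ℝ) =
      (B - B).filter (fun x => Nat.log 2 (rsub B B x) = j) := by
  ext x
  simp only [popDiff, Finset.mem_filter]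
  constructor
  · rintro ⟨hx, h1, h2⟩
    refine ⟨hx, ?_⟩
    have hn1 : (2:ℕ)^j ≤ rsub B B x := by exact_mod_cast h1
    have hn2 : rsub B B x < 2^(j+1) := by
      have : (rsub B B x : ℝ) < ((2^(j+1) : ℕ) : ℝ) := by
        push_cast at h2 ⊢
        rw [pow_succ]
        linarith
      exact_mod_cast this
    exact Nat.log_eq_of_pow_le_of_lt_pow hn1 hn2
  · rintro ⟨hx, hj⟩
    have hr : rsub B B x ≠ 0 := by
      have := one_le_rsub hx; omega
    have h1 : (2:ℕ)^j ≤ rsub B B x := hj ▸ Nat.pow_log_le_self 2 hr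
    have h2 : rsub B B x < 2^(j+1) := hj ▸ Nat.lt_pow_succ_log_self (by norm_num) _
    refine ⟨hx, by exact_mod_cast h1, ?_⟩
    have : (rsub B B x : ℝ) < ((2^(j+1) : ℕ) : ℝ) := by exact_mod_cast h2
    push_cast at this ⊢
    rw [pow_succ] at this
    linarith

lemma Ek_fiber_split {k : ℕ} {B A : Finset ℝ} (hBA : B ⊆ A) :
    Ek k B = ∑ j ∈ Finset.range (Nat.log 2 A.card + 1),
      ∑ x ∈ (B - B).filter (fun x => Nat.log 2 (rsub B B x) = j), rsub B B x ^ k := by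
  rw [Ek]
  rw [Finset.sum_fiberwise_of_maps_to]
  intro x hx
  rw [Finset.mem_range]
  have h1 : rsub B B x ≤ A.card := le_trans (rsub_le_card B B x) (Finset.card_le_card hBA)
  have := Nat.log_mono_right (b := 2) h1
  omega

lemma rsub_split {B G : Finset ℝ} (hG : G ⊆ B) (x : ℝ) :
    rsub (B \ G) (B \ G) x + rsub G B x ≤ rsub B B x := by
  classical
  set F1 := ((B \ G) ×ˢ (B \ G)).filter (fun p : ℝ × ℝ => p.1 - p.2 = x) with hF1
  set F2 := (G ×ˢ B).filter (fun p : ℝ × ℝ => p.1 - p.2 = x) with hF2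
  set F := (B ×ˢ B).filter (fun p : ℝ × ℝ => p.1 - p.2 = x) with hF
  have hdisj : Disjoint F1 F2 := by
    rw [Finset.disjoint_left]
    intro p hp1 hp2
    simp only [hF1, hF2, Finset.mem_filter, Finset.mem_product, Finset.mem_sdiff] at hp1 hp2
    exact hp1.1.1.2 hp2.1.1
  have hsub : F1 ∪ F2 ⊆ F := by
    intro p hp
    simp only [hF1, hF2, hF, Finset.mem_union, Finset.mem_filter, Finset.mem_product,
      Finset.mem_sdiff] at hp ⊢
    rcases hp with ⟨⟨⟨h1, _⟩, ⟨h2, _⟩⟩, h3⟩ | ⟨⟨h1, h2⟩, h3⟩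
    · exact ⟨⟨h1, h2⟩, h3⟩
    · exact ⟨⟨hG h1, h2⟩, h3⟩
  calc rsub (B \ G) (B \ G) x + rsub G B x = F1.card + F2.card := rfl
    _ = (F1 ∪ F2).card := (Finset.card_union_of_disjoint hdisj).symm
    _ ≤ F.card := Finset.card_le_card hsub
    _ = rsub B B x := rfl

lemma pow_drop {k r' l r : ℕ} (hk : k ≠ 0) (h : r' + l ≤ r) :
    r' ^ k + l * r ^ (k - 1) ≤ r ^ k := by
  have h1 : r' ^ k ≤ (r - l) ^ k := Nat.pow_le_pow_left (by omega) k
  have h2 : (r - l) ^ k ≤ (r - l) * r ^ (k - 1) := by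
    calc (r - l) ^ k = (r - l) * (r - l) ^ (k - 1) := by
          rw [← pow_succ']
          congr 1
          omega
      _ ≤ (r - l) * r ^ (k - 1) := Nat.mul_le_mul_left _ (Nat.pow_le_pow_left (by omega) _)
  have h3 : (r - l) * r ^ (k-1) + l * r ^ (k-1) = r * r ^ (k-1) := by
    rw [← Nat.add_mul]
    congr 1
    omega
  have h4 : r * r ^ (k-1) = r ^ k := by
    rw [← pow_succ']
    congr 1
    omega
  omega

lemma Ek_drop {k : ℕ} (hk : k ≠ 0) {B G : Finset ℝ} (hG : G ⊆ B)
    {P : Finset ℝ} (hP : P ⊆ B - B) {t : ℕ}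
    (ht : ∀ x ∈ P, t ≤ rsub B B x) :
    Ek k (B \ G) + t ^ (k - 1) * ∑ x ∈ P, rsub G B x ≤ Ek k B := by
  classical
  have hEk' : Ek k (B \ G) = ∑ x ∈ B - B, rsub (B \ G) (B \ G) x ^ k := by
    rw [Ek]
    apply Finset.sum_subset
    · exact Finset.sub_subset_sub (Finset.sdiff_subset) (Finset.sdiff_subset)
    · intro x _ hx
      rw [rsub_eq_zero hx, Nat.zero_pow (by omega)]
  have hsum1 : t ^ (k-1) * ∑ x ∈ P, rsub G B x ≤ ∑ x ∈ P, rsub G B x * rsub B B x ^ (k-1) := by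
    rw [Finset.mul_sum]
    apply Finset.sum_le_sum
    intro x hx
    rw [mul_comm]
    exact Nat.mul_le_mul_left _ (Nat.pow_le_pow_left (ht x hx) _)
  have hsum2 : ∑ x ∈ P, rsub G B x * rsub B B x ^ (k-1)
      ≤ ∑ x ∈ B - B, rsub G B x * rsub B B x ^ (k-1) :=
    Finset.sum_le_sum_of_subset hP
  have hmain : (∑ x ∈ B - B, rsub (B \ G) (B \ G) x ^ k)
      + ∑ x ∈ B - B, rsub G B x * rsub B B x ^ (k-1) ≤ Ek k B := by
    rw [← Finset.sum_add_distrib, Ek]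
    apply Finset.sum_le_sum
    intro x _
    exact pow_drop hk (rsub_split hG x)
  omega

noncomputable def LL (A : Finset ℝ) : ℕ := Nat.log 2 A.card + 1
noncomputable def lam (k : ℕ) (A : Finset ℝ) : ℕ := 2^(k+3) * (k+4) * (LL A)^2
noncomputable def eps (k : ℕ) (A : Finset ℝ) : ℝ := 3 / (2^(k+2) * (LL A : ℝ))

def Concl (k : ℕ) (A : Finset ℝ) : Prop :=
  ∃ (Bf B'' : Finset ℝ) (j : ℕ),
    Bf ⊆ A ∧ B'' ⊆ Bf ∧ (A.card : ℝ)/2 ≤ (Bf.card : ℝ) ∧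
    2^j ≤ Bf.card ∧
    (popDiff Bf ((2^j : ℕ) : ℝ)).card * (2^j)^k ≤ Ek k Bf ∧
    ((Ek k Bf : ℝ) ≤ 2^k * (LL A : ℝ) *
      (((popDiff Bf ((2^j:ℕ):ℝ)).card : ℝ) * ((2^j : ℕ) : ℝ)^k)) ∧
    ((Bf.card : ℝ) ≤ 2 * (lam k A : ℝ) * (B''.card : ℝ)) ∧
    ∀ b ∈ B'',
      (((popDiff Bf ((2^j:ℕ):ℝ)).card : ℝ) * ((2^j : ℕ) : ℝ)) / (4 * (A.card:ℝ))
          ≤ (radd (popDiff Bf ((2^j:ℕ):ℝ)) Bf b : ℝ) ∧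
      (radd (popDiff Bf ((2^j:ℕ):ℝ)) Bf b : ℝ) ≤
        32 * (lam k A : ℝ) * (((popDiff Bf ((2^j:ℕ):ℝ)).card : ℝ) * ((2^j:ℕ) : ℝ)) / (A.card : ℝ)

lemma core (k : ℕ) (hk : 1 < k) (A : Finset ℝ) (hA : 2 ≤ A.card) :
    ∀ E : ℕ, ∀ B : Finset ℝ, B ⊆ A → Ek k B ≤ E →
      (A.card : ℝ) / 2 ≤ (B.card : ℝ) →
      ((Ek k B : ℝ) ≤ (A.card : ℝ) ^ (k+1) *
        (1 - eps k A) ^ (((lam k A : ℝ) / (A.card : ℝ)) * ((A.card : ℝ) - (B.card : ℝ)))) →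
      Concl k A := by
  classical
  intro E
  induction E with
  | zero =>
      intro B hBA hBE hBcard _
      exfalso
      have h1 : (1:ℝ) ≤ (B.card : ℝ) := by
        have : (2:ℝ) ≤ (A.card : ℝ) := by exact_mod_cast hA
        linarith
      have h2 : 1 ≤ B.card := by exact_mod_cast h1
      have h3 := card_sq_le_Ek (k := k) (by omega) B
      have : 1 ≤ Ek k B := le_trans (by nlinarith only [h2]) h3
      omega
  | succ E ih =>
      intro B hBA hBE hBcard hBen
      have hk0 : k ≠ 0 := by omega
      have hn2R : (2:ℝ) ≤ (A.card : ℝ) := by exact_mod_cast hA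
      have hnpos : (0:ℝ) < (A.card : ℝ) := by linarith
      have hL1 : 1 ≤ LL A := Nat.le_add_left 1 _
      have hLposR : (0:ℝ) < (LL A : ℝ) := by exact_mod_cast hL1
      have hB1 : 1 ≤ B.card := by
        have h1 : (1:ℝ) ≤ (B.card : ℝ) := by linarith
        exact_mod_cast h1
      have hEk1 : 1 ≤ Ek k B := by
        have h := card_sq_le_Ek hk0 B
        nlinarith only [h, hB1]
      -- dyadic choice of t
      have hsplit := Ek_fiber_split (k := k) hBA
      obtain ⟨j, hjmem, hjmax⟩ := Finset.exists_max_image (Finset.range (LL A))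
        (fun j => ∑ x ∈ (B - B).filter (fun x => Nat.log 2 (rsub B B x) = j),
          rsub B B x ^ k) ⟨0, Finset.mem_range.mpr hL1⟩
      set t : ℕ := 2 ^ j with ht
      have ht1 : 1 ≤ t := Nat.one_le_two_pow
      set P : Finset ℝ := popDiff B ((t : ℕ) : ℝ) with hPdef
      have hPfiber : P = (B - B).filter (fun x => Nat.log 2 (rsub B B x) = j) :=
        popDiff_eq_fiber B j
      have hPsub : P ⊆ B - B := by rw [hPfiber]; exact Finset.filter_subset _ _
      have hmemP : ∀ x ∈ P, t ≤ rsub B B x ∧ rsub B B x ≤ 2 * t := by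
        intro x hx
        rw [hPdef, popDiff, Finset.mem_filter] at hx
        obtain ⟨-, h1, h2⟩ := hx
        constructor
        · exact_mod_cast h1
        · have : (rsub B B x : ℝ) ≤ ((2 * t : ℕ) : ℝ) := by push_cast; linarith
          exact_mod_cast this
      have hEk_le_LS : Ek k B ≤ LL A * (∑ x ∈ P, rsub B B x ^ k) := by
        rw [hsplit, hPfiber]
        have := Finset.sum_le_card_nsmul (Finset.range (LL A))
          (fun j' => ∑ x ∈ (B - B).filter (fun x => Nat.log 2 (rsub B B x) = j'),
            rsub B B x ^ k)
          (∑ x ∈ (B - B).filter (fun x => Nat.log 2 (rsub B B x) = j), rsub B B x ^ k)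
          (fun j' hj' => hjmax j' hj')
        simpa [LL, Finset.card_range, smul_eq_mul] using this
      have hSj_ge : P.card * t ^ k ≤ ∑ x ∈ P, rsub B B x ^ k := by
        have := Finset.card_nsmul_le_sum P (fun x => rsub B B x ^ k) (t ^ k)
          (fun x hx => Nat.pow_le_pow_left (hmemP x hx).1 k)
        simpa [smul_eq_mul] using this
      have hSj_le : ∑ x ∈ P, rsub B B x ^ k ≤ P.card * (2 * t) ^ k := by
        have := Finset.sum_le_card_nsmul P (fun x => rsub B B x ^ k) ((2 * t) ^ k)
          (fun x hx => Nat.pow_le_pow_left (hmemP x hx).2 k)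
        simpa [smul_eq_mul] using this
      have hEk_ge : ∑ x ∈ P, rsub B B x ^ k ≤ Ek k B := by
        rw [hsplit, hPfiber]
        exact Finset.single_le_sum (f := fun j' => ∑ x ∈ (B - B).filter
          (fun x => Nat.log 2 (rsub B B x) = j'), rsub B B x ^ k)
          (fun j' _ => Nat.zero_le _) hjmem
      have hElow : P.card * t ^ k ≤ Ek k B := le_trans hSj_ge hEk_ge
      have hEk_up : Ek k B ≤ 2 ^ k * LL A * (P.card * t ^ k) := by
        calc Ek k B ≤ LL A * (∑ x ∈ P, rsub B B x ^ k) := hEk_le_LS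
          _ ≤ LL A * (P.card * (2 * t) ^ k) := Nat.mul_le_mul_left _ hSj_le
          _ = 2 ^ k * LL A * (P.card * t ^ k) := by rw [mul_pow]; ring
      have hPpos : 1 ≤ P.card := by
        rcases Nat.eq_zero_or_pos P.card with h0 | h
        · rw [h0] at hEk_up; simp at hEk_up; omega
        · exact h
      have htB : t ≤ B.card := by
        obtain ⟨x, hx⟩ := Finset.card_pos.mp hPpos
        exact le_trans (hmemP x hx).1 (rsub_le_card B B x)
      -- the sum T
      set T : ℕ := ∑ b ∈ B, radd P B b with hTdef
      have hTP : T = ∑ x ∈ P, rsub B B x := sum_radd P B B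
      set Pt : ℕ := P.card * t with hPt
      have hPt1 : 1 ≤ Pt := Nat.mul_le_mul hPpos ht1
      have hTlow : Pt ≤ T := by
        rw [hTP, hPt]
        have := Finset.card_nsmul_le_sum P (fun x => rsub B B x) t
          (fun x hx => (hmemP x hx).1)
        simpa [smul_eq_mul] using this
      have hThigh : T ≤ 2 * Pt := by
        rw [hTP, hPt]
        have := Finset.sum_le_card_nsmul P (fun x => rsub B B x) (2 * t)
          (fun x hx => (hmemP x hx).2)
        calc ∑ x ∈ P, rsub B B x ≤ P.card • (2 * t) := this
          _ = 2 * (P.card * t) := by rw [smul_eq_mul]; ring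
      set Good : Finset ℝ := B.filter
        (fun b => (Pt : ℝ) ≤ 4 * (A.card : ℝ) * (radd P B b : ℝ)) with hGooddef
      have hGoodB : Good ⊆ B := Finset.filter_subset _ _
      have hBadsum : ∑ b ∈ B \ Good, (radd P B b : ℝ) ≤ (Pt : ℝ) / 4 := by
        have h1 : ∀ b ∈ B \ Good, (radd P B b : ℝ) ≤ (Pt : ℝ) / (4 * (A.card : ℝ)) := by
          intro b hb
          rw [Finset.mem_sdiff, hGooddef, Finset.mem_filter] at hb
          have h2 : ¬ ((Pt : ℝ) ≤ 4 * (A.card : ℝ) * (radd P B b : ℝ)) := fun h => hb.2 ⟨hb.1, h⟩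
          push_neg at h2
          rw [le_div_iff₀ (by positivity)]
          linarith only [h2]
        calc ∑ b ∈ B \ Good, (radd P B b : ℝ)
            ≤ (B \ Good).card • ((Pt : ℝ) / (4 * (A.card : ℝ))) :=
              Finset.sum_le_card_nsmul _ _ _ h1
          _ = ((B \ Good).card : ℝ) * ((Pt : ℝ) / (4 * (A.card : ℝ))) := by
              rw [nsmul_eq_mul]
          _ ≤ (A.card : ℝ) * ((Pt : ℝ) / (4 * (A.card : ℝ))) := by
              apply mul_le_mul_of_nonneg_right _ (by positivity)
              have h3 : (B \ Good).card ≤ A.card :=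
                le_trans (Finset.card_le_card (le_trans Finset.sdiff_subset hBA : B \ Good ⊆ A)) le_rfl
              exact_mod_cast h3
          _ = (Pt : ℝ) / 4 := by field_simp
      have hGoodsum : (3:ℝ)/4 * (Pt : ℝ) ≤ ∑ b ∈ Good, (radd P B b : ℝ) := by
        have hsd : ∑ b ∈ B \ Good, (radd P B b : ℝ) + ∑ b ∈ Good, (radd P B b : ℝ)
            = ∑ b ∈ B, (radd P B b : ℝ) := Finset.sum_sdiff hGoodB
        have hTc : ∑ b ∈ B, (radd P B b : ℝ) = (T : ℝ) := by
          rw [hTdef]; push_cast; rfl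
        have hPtT : (Pt : ℝ) ≤ (T : ℝ) := by exact_mod_cast hTlow
        linarith
      rcases le_or_gt (B.card : ℝ) ((lam k A : ℝ) * (Good.card : ℝ)) with hcase | hcase
      · -- STOP case
        have hlamN : 4 ≤ lam k A := by
          have h1 : (32:ℕ) ≤ 2^(k+3) := by
            calc (32:ℕ) = 2^5 := by norm_num
              _ ≤ 2^(k+3) := Nat.pow_le_pow_right (by norm_num) (by omega)
          have h2 : 1 ≤ (LL A)^2 := Nat.one_le_pow _ _ (by omega)
          calc 4 ≤ 32 * (k+4) * 1 := by omega
            _ ≤ 2^(k+3) * (k+4) * (LL A)^2 :=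
                Nat.mul_le_mul (Nat.mul_le_mul h1 le_rfl) h2
            _ = lam k A := rfl
        have hlamR : (4:ℝ) ≤ (lam k A : ℝ) := by exact_mod_cast hlamN
        have hlampos : (0:ℝ) < (lam k A : ℝ) := by linarith
        have hT1 : 1 ≤ T := le_trans hPt1 hTlow
        have hTposR : (0:ℝ) < (T : ℝ) := by exact_mod_cast hT1
        have hBposR : (0:ℝ) < (B.card : ℝ) := by exact_mod_cast hB1
        set thr : ℝ := 8 * (lam k A : ℝ) * (T : ℝ) / (B.card : ℝ) with hthr
        have hthrpos : 0 < thr := by rw [hthr]; positivity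
        set B'' : Finset ℝ := Good.filter (fun b => (radd P B b : ℝ) ≤ thr) with hB''def
        set Heavy : Finset ℝ := B.filter (fun b => ¬ ((radd P B b : ℝ) ≤ thr)) with hHeavydef
        have hHsum : (Heavy.card : ℝ) * thr ≤ (T : ℝ) := by
          have h1 : ∀ b ∈ Heavy, thr ≤ (radd P B b : ℝ) := by
            intro b hb
            rw [hHeavydef, Finset.mem_filter] at hb
            exact (not_le.mp hb.2).le
          have h2 := Finset.card_nsmul_le_sum Heavy (fun b => (radd P B b : ℝ)) thr h1
          rw [nsmul_eq_mul] at h2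
          have h3 : ∑ b ∈ Heavy, (radd P B b : ℝ) ≤ ∑ b ∈ B, (radd P B b : ℝ) :=
            Finset.sum_le_sum_of_subset_of_nonneg (Finset.filter_subset _ _)
              (fun _ _ _ => by positivity)
          have h4 : ∑ b ∈ B, (radd P B b : ℝ) = (T : ℝ) := by rw [hTdef]; push_cast; rfl
          linarith
        have h8lamHeavy : 8 * (lam k A : ℝ) * (Heavy.card : ℝ) ≤ (B.card : ℝ) := by
          have h5 := mul_le_mul_of_nonneg_right hHsum hBposR.le
          rw [hthr] at h5
          rw [mul_assoc, div_mul_cancel₀ _ hBposR.ne'] at h5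
          -- h5 : Heavy.card * (8 * lam * T) ≤ T * B.card
          nlinarith only [h5, hTposR]
        have hlamGood : (B.card : ℝ) ≤ (lam k A : ℝ) * (Good.card : ℝ) := hcase
        have hGoodB'' : (Good.card : ℝ) ≤ (B''.card : ℝ) + (Heavy.card : ℝ) := by
          have hsub : Good ⊆ B'' ∪ Heavy := by
            intro b hb
            by_cases hbh : (radd P B b : ℝ) ≤ thr
            · exact Finset.mem_union_left _ (Finset.mem_filter.mpr ⟨hb, hbh⟩)
            · exact Finset.mem_union_right _ (Finset.mem_filter.mpr ⟨hGoodB hb, hbh⟩)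
          have := le_trans (Finset.card_le_card hsub) (Finset.card_union_le _ _)
          exact_mod_cast this
        have hB''card : (B.card : ℝ) ≤ 2 * (lam k A : ℝ) * (B''.card : ℝ) := by
          have h6 : (lam k A : ℝ) * (Good.card : ℝ) ≤
              (lam k A : ℝ) * ((B''.card : ℝ) + (Heavy.card : ℝ)) :=
            mul_le_mul_of_nonneg_left hGoodB'' hlampos.le
          have h7 : (0:ℝ) ≤ (B''.card : ℝ) := by positivity
          nlinarith only [h6, hlamGood, h8lamHeavy, hBposR, h7, hlampos]
        refine ⟨B, B'', j, hBA, ?_, ?_, ?_, ?_, ?_, ?_, ?_⟩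
        · exact le_trans (Finset.filter_subset _ _) hGoodB
        · exact hBcard
        · exact htB
        · exact hElow
        · show (Ek k B : ℝ) ≤ 2 ^ k * (LL A : ℝ) * ((P.card : ℝ) * ((t:ℕ) : ℝ)^k)
          have : (Ek k B : ℝ) ≤ ((2 ^ k * LL A * (P.card * t ^ k) : ℕ) : ℝ) := by
            exact_mod_cast hEk_up
          push_cast at this
          linarith
        · exact hB''card
        · intro b hb
          show ((P.card : ℝ) * ((t:ℕ):ℝ)) / (4 * (A.card : ℝ)) ≤ (radd P B b : ℝ) ∧
            (radd P B b : ℝ) ≤ 32 * (lam k A : ℝ) * ((P.card : ℝ) * ((t:ℕ):ℝ)) / (A.card : ℝ)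
          rw [hB''def, Finset.mem_filter] at hb
          obtain ⟨hbG, hbthr⟩ := hb
          rw [hGooddef, Finset.mem_filter] at hbG
          constructor
          · rw [div_le_iff₀ (by positivity)]
            have h7 := hbG.2
            have : ((P.card : ℝ) * (t : ℝ)) = (Pt : ℝ) := by rw [hPt]; push_cast; ring
            rw [this]
            linarith only [h7]
          · -- radd ≤ thr ≤ 32 lam Pt / n
            have hT2Pt : (T : ℝ) ≤ 2 * (Pt : ℝ) := by exact_mod_cast hThigh
            have hBn2 : (A.card : ℝ) / 2 ≤ (B.card : ℝ) := hBcard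
            have hthrle : thr ≤ 32 * (lam k A : ℝ) * (Pt : ℝ) / (A.card : ℝ) := by
              rw [hthr, div_le_div_iff₀ hBposR hnpos]
              have hPtpos : (0:ℝ) < (Pt : ℝ) := by exact_mod_cast hPt1
              have e1 : (T:ℝ) * (A.card:ℝ) ≤ 2 * (Pt:ℝ) * (A.card:ℝ) :=
                mul_le_mul_of_nonneg_right hT2Pt hnpos.le
              have e2 : (A.card:ℝ) * (Pt:ℝ) ≤ 2 * (B.card:ℝ) * (Pt:ℝ) :=
                mul_le_mul_of_nonneg_right (by linarith only [hBn2]) hPtpos.le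
              have f1 := mul_le_mul_of_nonneg_left e1 hlampos.le
              have f2 := mul_le_mul_of_nonneg_left e2 hlampos.le
              linarith only [f1, f2]
            have : ((P.card : ℝ) * (t : ℝ)) = (Pt : ℝ) := by rw [hPt]; push_cast; ring
            rw [this]
            linarith
      · -- RECURSE case
        have hPtposR : (0:ℝ) < (Pt : ℝ) := by exact_mod_cast hPt1
        set D : ℕ := ∑ x ∈ P, rsub Good B x with hDdef
        have hDG : (D : ℝ) = ∑ b ∈ Good, (radd P B b : ℝ) := by
          rw [hDdef, ← sum_radd P B Good]
          push_cast
          rfl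
        have hDlow : (3:ℝ)/4 * (Pt:ℝ) ≤ (D:ℝ) := by rw [hDG]; exact hGoodsum
        have hD1 : 1 ≤ D := by
          by_contra h
          push_neg at h
          have hD0 : D = 0 := by omega
          rw [hD0] at hDlow
          simp at hDlow
          linarith
        have hdrop := Ek_drop hk0 hGoodB hPsub (fun x hx => (hmemP x hx).1)
        rw [← hDdef] at hdrop
        have htk1 : 1 ≤ t ^ (k-1) := Nat.one_le_pow _ _ (by omega)
        have hEkB'E : Ek k (B \ Good) ≤ E := by
          have h1 : 1 ≤ t^(k-1) * D := Nat.mul_le_mul htk1 hD1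
          omega
        set B' : Finset ℝ := B \ Good with hB'def
        have hB'A : B' ⊆ A := le_trans Finset.sdiff_subset hBA
        -- eps facts
        have hepspos : 0 < eps k A := by rw [eps]; positivity
        have h2k2 : (16:ℝ) ≤ 2^(k+2) := by
          calc (16:ℝ) = 2^4 := by norm_num
            _ ≤ 2^(k+2) := by
                apply pow_le_pow_right₀ (by norm_num)
                omega
        have hepslt : eps k A ≤ 3/16 := by
          rw [eps]
          rw [div_le_div_iff₀ (by positivity) (by norm_num)]
          have hL1R : (1:ℝ) ≤ (LL A : ℝ) := by exact_mod_cast hL1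
          have h2' := mul_le_mul h2k2 hL1R (by norm_num) (by linarith only [h2k2])
          linarith only [h2']
        have h1eps_pos : (0:ℝ) < 1 - eps k A := by linarith
        -- real energy drop
        have hEup_R : (Ek k B : ℝ) ≤ 2^k * (LL A:ℝ) * ((Pt:ℝ) * (t:ℝ)^(k-1)) := by
          have h1 : (Ek k B : ℝ) ≤ ((2^k * LL A * (P.card * t^k) : ℕ):ℝ) := by
            exact_mod_cast hEk_up
          push_cast at h1
          have h2 : (P.card : ℝ) * (t:ℝ)^k = (Pt:ℝ) * (t:ℝ)^(k-1) := by
            have h3 : ((t:ℝ))^k = (t:ℝ) * (t:ℝ)^(k-1) := by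
              rw [← pow_succ']
              congr 1
              omega
            rw [h3, hPt]
            push_cast
            ring
          rw [← h2]
          linarith
        have hdropR : (Ek k B' : ℝ) ≤ (1 - eps k A) * (Ek k B : ℝ) := by
          have hc : (Ek k B' : ℝ) + (t:ℝ)^(k-1) * (D:ℝ) ≤ (Ek k B : ℝ) := by
            rw [hB'def]
            exact_mod_cast hdrop
          have h4 : eps k A * (Ek k B : ℝ) ≤
              eps k A * (2^k * (LL A:ℝ) * ((Pt:ℝ) * (t:ℝ)^(k-1))) :=
            mul_le_mul_of_nonneg_left hEup_R hepspos.le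
          have h5 : eps k A * (2^k * (LL A:ℝ) * ((Pt:ℝ) * (t:ℝ)^(k-1)))
              = 3/4 * (Pt:ℝ) * (t:ℝ)^(k-1) := by
            rw [eps]
            have h6 : (2:ℝ)^(k+2) = 2^k * 4 := by rw [pow_add]; norm_num
            field_simp
            rw [h6]
          have h7 : (3:ℝ)/4 * (Pt:ℝ) * (t:ℝ)^(k-1) ≤ (t:ℝ)^(k-1) * (D:ℝ) := by
            have h8 : (0:ℝ) ≤ (t:ℝ)^(k-1) := by positivity
            have h9 := mul_le_mul_of_nonneg_right hDlow h8
            linarith only [h9]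
          linarith only [hc, h4, h7, h5.le, h5.ge]
        -- exponent bookkeeping
        have hlamGn : (lam k A : ℝ) * (Good.card : ℝ) ≤ (A.card : ℝ) := by
          have h9 : (B.card:ℝ) ≤ (A.card:ℝ) := by
            exact_mod_cast Finset.card_le_card hBA
          linarith
        have hGB : Good.card ≤ B.card := Finset.card_le_card hGoodB
        have hB'cardEq : (B'.card : ℝ) = (B.card : ℝ) - (Good.card : ℝ) := by
          rw [hB'def, Finset.card_sdiff_of_subset hGoodB]
          have := hGB
          push_cast [Nat.cast_sub this]
          ring
        have hBlecards : (B.card:ℝ) ≤ (A.card:ℝ) := by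
          exact_mod_cast Finset.card_le_card hBA
        have hlamposR : (0:ℝ) < (lam k A : ℝ) := by
          have : 1 ≤ lam k A := by
            have := Nat.one_le_two_pow (n := k+3)
            have h2' : 1 ≤ (LL A)^2 := Nat.one_le_pow _ _ (by omega)
            calc 1 = 1*1*1 := by ring
              _ ≤ 2^(k+3) * (k+4) * (LL A)^2 :=
                  Nat.mul_le_mul (Nat.mul_le_mul this (by omega)) h2'
              _ = lam k A := rfl
          exact_mod_cast Nat.lt_of_lt_of_le Nat.zero_lt_one this
        have hBen' : (Ek k B' : ℝ) ≤ (A.card : ℝ) ^ (k+1) *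
            (1 - eps k A) ^ (((lam k A : ℝ) / (A.card : ℝ)) * ((A.card : ℝ) - (B'.card : ℝ))) := by
          set x : ℝ := ((lam k A : ℝ) / (A.card : ℝ)) * ((A.card : ℝ) - (B.card : ℝ)) with hx
          have hstep : ((lam k A : ℝ) / (A.card : ℝ)) * ((A.card : ℝ) - (B'.card : ℝ)) ≤ x + 1 := by
            rw [hx, hB'cardEq]
            have h10 : ((lam k A : ℝ) / (A.card : ℝ)) * (Good.card : ℝ) ≤ 1 := by
              rw [div_mul_eq_mul_div, div_le_one hnpos]
              linarith [hlamGn]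
            have h11 : ((lam k A:ℝ)/(A.card:ℝ)) * ((A.card:ℝ) - ((B.card:ℝ) - (Good.card:ℝ)))
                = x + ((lam k A:ℝ)/(A.card:ℝ)) * (Good.card:ℝ) := by
              rw [hx]; ring
            linarith [h11.le]
          calc (Ek k B' : ℝ) ≤ (1 - eps k A) * (Ek k B : ℝ) := hdropR
            _ ≤ (1 - eps k A) * ((A.card:ℝ)^(k+1) * (1 - eps k A) ^ x) :=
                mul_le_mul_of_nonneg_left hBen h1eps_pos.le
            _ = (A.card:ℝ)^(k+1) * ((1 - eps k A) ^ x * (1 - eps k A) ^ (1:ℝ)) := by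
                rw [Real.rpow_one]; ring
            _ = (A.card:ℝ)^(k+1) * (1 - eps k A) ^ (x + 1) := by
                rw [← Real.rpow_add h1eps_pos]
            _ ≤ (A.card:ℝ)^(k+1) * (1 - eps k A) ^
                (((lam k A : ℝ) / (A.card : ℝ)) * ((A.card : ℝ) - (B'.card : ℝ))) := by
                apply mul_le_mul_of_nonneg_left _ (by positivity)
                exact Real.rpow_le_rpow_of_exponent_ge h1eps_pos (by linarith) hstep
        -- new cardinality bound
        have hlogL : Real.log (A.card : ℝ) ≤ (LL A : ℝ) := by
          have h12 : (A.card : ℕ) < 2 ^ (LL A) := Nat.lt_pow_succ_log_self (by norm_num) _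
          have h13 : (A.card : ℝ) ≤ (2:ℝ) ^ (LL A) := by
            have : ((A.card : ℕ) : ℝ) ≤ ((2 ^ (LL A) : ℕ) : ℝ) := by exact_mod_cast h12.le
            push_cast at this
            exact this
          calc Real.log (A.card : ℝ) ≤ Real.log ((2:ℝ) ^ (LL A)) :=
                Real.log_le_log (by linarith) h13
            _ = (LL A : ℝ) * Real.log 2 := by rw [Real.log_pow]
            _ ≤ (LL A : ℝ) * 1 := by
                apply mul_le_mul_of_nonneg_left _ (by positivity)
                have := Real.log_two_lt_d9
                linarith
            _ = (LL A : ℝ) := by ring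
        have hL1R : (1:ℝ) ≤ (LL A : ℝ) := by exact_mod_cast hL1
        have hepslam : eps k A * (lam k A : ℝ) / 2 = 3 * ((k:ℝ)+4) * (LL A : ℝ) := by
          rw [eps]
          have hlamval : (lam k A : ℝ) = 2^(k+3) * ((k:ℝ)+4) * (LL A:ℝ)^2 := by
            show ((2^(k+3) * (k+4) * (LL A)^2 : ℕ) : ℝ) = _
            push_cast
            ring
          rw [hlamval]
          have h6 : (2:ℝ)^(k+3) = 2^(k+2) * 2 := by rw [pow_succ]
          field_simp
          rw [h6]
        have hcardB'R : (A.card : ℝ)/2 ≤ (B'.card : ℝ) := by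
          by_contra hlt
          push_neg at hlt
          have h7' : (Good.card : ℝ) ≤ (A.card:ℝ)/4 := by
            have hlamR4 : (4:ℝ) ≤ (lam k A : ℝ) := by
              have h1' : (32:ℕ) ≤ 2^(k+3) := by
                calc (32:ℕ) = 2^5 := by norm_num
                  _ ≤ 2^(k+3) := Nat.pow_le_pow_right (by norm_num) (by omega)
              have h2' : 1 ≤ (LL A)^2 := Nat.one_le_pow _ _ (by omega)
              have : 4 ≤ lam k A := by
                calc 4 ≤ 32 * (k+4) * 1 := by omega
                  _ ≤ 2^(k+3) * (k+4) * (LL A)^2 :=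
                      Nat.mul_le_mul (Nat.mul_le_mul h1' le_rfl) h2'
                  _ = lam k A := rfl
              exact_mod_cast this
            have hg0 : (0:ℝ) ≤ (Good.card:ℝ) := by positivity
            have hgm := mul_le_mul_of_nonneg_right hlamR4 hg0
            linarith only [hgm, hlamGn]
          have h8' : (A.card:ℝ)/4 ≤ (B'.card : ℝ) := by
            rw [hB'cardEq]
            linarith
          have h9' : (A.card:ℝ)^2/16 ≤ (Ek k B' : ℝ) := by
            have h14 : ((B'.card * B'.card : ℕ) : ℝ) ≤ (Ek k B' : ℝ) := by
              exact_mod_cast card_sq_le_Ek hk0 B'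
            push_cast at h14
            have hb0 : (0:ℝ) ≤ (B'.card : ℝ) := by positivity
            have h25 := mul_le_mul h8' h8' (by positivity) hb0
            linarith only [h25, h14]
          -- exponent lower bound
          have h10' : (lam k A : ℝ)/2 ≤ ((lam k A : ℝ)/(A.card:ℝ)) * ((A.card:ℝ) - (B'.card:ℝ)) := by
            rw [div_mul_eq_mul_div, le_div_iff₀ hnpos]
            have h26 : (A.card:ℝ)/2 ≤ (A.card:ℝ) - (B'.card:ℝ) := by linarith only [hlt]
            have h27 := mul_le_mul_of_nonneg_left h26 hlamposR.le
            linarith only [h27]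
          have h11' : (Ek k B' : ℝ) ≤ (A.card:ℝ)^(k+1) * (1 - eps k A)^((lam k A : ℝ)/2) := by
            calc (Ek k B' : ℝ) ≤ _ := hBen'
              _ ≤ (A.card:ℝ)^(k+1) * (1 - eps k A)^((lam k A : ℝ)/2) := by
                  apply mul_le_mul_of_nonneg_left _ (by positivity)
                  exact Real.rpow_le_rpow_of_exponent_ge h1eps_pos (by linarith) h10'
          -- (1-eps)^(lam/2) ≤ exp(-eps*lam/2)
          have h15 : (1 - eps k A) ^ ((lam k A : ℝ)/2) ≤
              Real.exp (-(eps k A * (lam k A : ℝ)/2)) := by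
            have hbase : 1 - eps k A ≤ Real.exp (-(eps k A)) := by
              have := Real.add_one_le_exp (-(eps k A))
              linarith
            calc (1 - eps k A) ^ ((lam k A : ℝ)/2)
                ≤ (Real.exp (-(eps k A))) ^ ((lam k A : ℝ)/2) :=
                  Real.rpow_le_rpow h1eps_pos.le hbase (by positivity)
              _ = Real.exp (-(eps k A) * ((lam k A : ℝ)/2)) := by
                  rw [← Real.exp_mul]
              _ = Real.exp (-(eps k A * (lam k A : ℝ)/2)) := by ring_nf
          have h16 : Real.exp (-(eps k A * (lam k A : ℝ)/2)) =
              Real.exp (-(3 * ((k:ℝ)+4) * (LL A : ℝ))) := by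
            rw [hepslam]
          -- key numeric bound : 16 * n^(k-1) < exp(3(k+4)L)
          have hexp1 : (2:ℝ) ≤ Real.exp 1 := by
            have := Real.add_one_le_exp (1:ℝ)
            linarith
          have h17 : (16:ℝ) ≤ Real.exp 4 := by
            have h18 : (2:ℝ)^(4:ℕ) ≤ (Real.exp 1)^(4:ℕ) :=
              pow_le_pow_left₀ (by norm_num) hexp1 4
            have h19 : (Real.exp 1)^(4:ℕ) = Real.exp 4 := by
              rw [← Real.exp_nat_mul]
              norm_num
            rw [h19] at h18
            linarith [h18]
          have h20 : (A.card : ℝ) ≤ Real.exp (LL A : ℝ) := by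
            calc (A.card:ℝ) = Real.exp (Real.log (A.card:ℝ)) :=
                  (Real.exp_log hnpos).symm
              _ ≤ Real.exp (LL A : ℝ) := Real.exp_le_exp.mpr hlogL
          have h21 : (A.card : ℝ)^(k-1) ≤ Real.exp (((k:ℝ)-1) * (LL A : ℝ)) := by
            calc (A.card:ℝ)^(k-1) ≤ (Real.exp (LL A : ℝ))^(k-1) :=
                  pow_le_pow_left₀ hnpos.le h20 _
              _ = Real.exp (((k-1 : ℕ):ℝ) * (LL A : ℝ)) := by
                  rw [← Real.exp_nat_mul]
              _ = Real.exp (((k:ℝ)-1) * (LL A : ℝ)) := by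
                  congr 1
                  have : ((k-1 : ℕ):ℝ) = (k:ℝ) - 1 := by
                    have : 1 ≤ k := by omega
                    push_cast [Nat.cast_sub this]
                    ring
                  rw [this]
          have hkR : (2:ℝ) ≤ (k:ℝ) := by exact_mod_cast hk
          have h22 : 16 * (A.card:ℝ)^(k-1) < Real.exp (3 * ((k:ℝ)+4) * (LL A : ℝ)) := by
            calc 16 * (A.card:ℝ)^(k-1)
                ≤ Real.exp 4 * Real.exp (((k:ℝ)-1) * (LL A : ℝ)) := by
                  apply mul_le_mul h17 h21 (by positivity) (by positivity)
              _ = Real.exp (4 + ((k:ℝ)-1) * (LL A : ℝ)) := by rw [← Real.exp_add]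
              _ < Real.exp (3 * ((k:ℝ)+4) * (LL A : ℝ)) := by
                  apply Real.exp_lt_exp.mpr
                  have e4 : (17:ℝ) ≤ 2*(k:ℝ)+13 := by linarith only [hkR]
                  have e5 := mul_le_mul e4 hL1R (by norm_num) (by linarith only [e4])
                  nlinarith only [e5]
          -- combine
          have h23 : (A.card:ℝ)^(k+1) = (A.card:ℝ)^2 * (A.card:ℝ)^(k-1) := by
            rw [← pow_add]
            congr 1
            omega
          have hexppos : (0:ℝ) < Real.exp (3 * ((k:ℝ)+4) * (LL A : ℝ)) := Real.exp_pos _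
          set X : ℝ := 3 * ((k:ℝ)+4) * (LL A : ℝ) with hX
          have hexpposX : (0:ℝ) < Real.exp X := Real.exp_pos _
          have hstep1 : (A.card:ℝ)^(k-1) * Real.exp (-X) < 1/16 := by
            rw [Real.exp_neg, ← div_eq_mul_inv, div_lt_div_iff₀ hexpposX (by norm_num : (0:ℝ) < 16)]
            linarith only [h22]
          have h24 : (A.card:ℝ)^(k+1) * Real.exp (-X) < (A.card:ℝ)^2/16 := by
            rw [h23, mul_assoc]
            have h28 := mul_lt_mul_of_pos_left hstep1
              (by positivity : (0:ℝ) < (A.card:ℝ)^2)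
            calc (A.card:ℝ)^2 * ((A.card:ℝ)^(k-1) * Real.exp (-X))
                < (A.card:ℝ)^2 * (1/16) := h28
              _ = (A.card:ℝ)^2/16 := by ring
          have hchain : (Ek k B' : ℝ) ≤ (A.card:ℝ)^(k+1) * Real.exp (-X) := by
            calc (Ek k B' : ℝ) ≤ (A.card:ℝ)^(k+1) * (1 - eps k A)^((lam k A : ℝ)/2) := h11'
              _ ≤ (A.card:ℝ)^(k+1) * Real.exp (-X) := by
                  apply mul_le_mul_of_nonneg_left _ (by positivity)
                  calc (1 - eps k A)^((lam k A : ℝ)/2)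
                      ≤ Real.exp (-(eps k A * (lam k A : ℝ)/2)) := h15
                    _ = Real.exp (-X) := by rw [hepslam]
          linarith only [h9', hchain, h24]
        exact ih B' hB'A hEkB'E hcardB'R hBen'

theorem rudnev_stevens_regularization (k : ℕ) (hk : 1 < k) :
    ∃ C c γ : ℝ, 0 < C ∧ 0 < c ∧ 0 ≤ γ ∧
      ∀ A : Finset ℝ, 2 ≤ A.card →
        ∃ B B'' : Finset ℝ, B'' ⊆ B ∧ B ⊆ A ∧
          ∃ t : ℝ, 1 ≤ t ∧ t ≤ (B.card : ℝ) ∧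
            -- (i)
            c * (A.card : ℝ) ≤ (B.card : ℝ) ∧
            c * (B.card : ℝ) * Real.log (A.card : ℝ) ^ (-γ) ≤ (B''.card : ℝ) ∧
            -- (ii)
            c * Real.log (A.card : ℝ) ^ (-γ) * ((popDiff B t).card : ℝ) * t ^ k ≤
              (Ek k B : ℝ) ∧
            (Ek k B : ℝ) ≤
              C * Real.log (A.card : ℝ) ^ γ * ((popDiff B t).card : ℝ) * t ^ k ∧
            -- (iii)
            ∀ b ∈ B'',
              c * Real.log (A.card : ℝ) ^ (-γ) * ((popDiff B t).card : ℝ) * t /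
                  (A.card : ℝ) ≤ (radd (popDiff B t) B b : ℝ) ∧
              (radd (popDiff B t) B b : ℝ) ≤
                C * Real.log (A.card : ℝ) ^ γ * ((popDiff B t).card : ℝ) * t /
                  (A.card : ℝ) := by
  classical
  have hlog2 : (0:ℝ) < Real.log 2 := Real.log_pos (by norm_num)
  have hlog2lt1 : Real.log 2 < 1 := by
    have := Real.log_two_lt_d9
    linarith
  set l2 : ℝ := Real.log 2 with hl2
  set c2 : ℝ := 9 * 2^(k+3) * ((k:ℝ) + 4) with hc2def
  have hc2pos : 0 < c2 := by rw [hc2def]; positivity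
  set C : ℝ := (3 * 2^k + 32 * c2) / l2^3 with hCdef
  set c : ℝ := min (min (1/2) (l2^3/4)) (l2/(2*c2)) with hcdef
  have hCpos : 0 < C := by rw [hCdef]; positivity
  have hcpos : 0 < c := by
    rw [hcdef]
    exact lt_min (lt_min (by norm_num) (by positivity)) (by positivity)
  have hc_half : c ≤ 1/2 := le_trans (min_le_left _ _) (min_le_left _ _)
  have hc_quarter : c ≤ l2^3/4 := le_trans (min_le_left _ _) (min_le_right _ _)
  have hc_c2 : c ≤ l2/(2*c2) := min_le_right _ _
  refine ⟨C, c, 3, hCpos, hcpos, by norm_num, ?_⟩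
  intro A hA
  obtain ⟨Bf, B'', j, hBfA, hB''Bf, hBfcard, htBf, hElow, hEup, hB''card, hmem⟩ :=
    core k hk A hA (Ek k A) A le_rfl le_rfl
      (by
        have hn2R : (2:ℝ) ≤ (A.card : ℝ) := by exact_mod_cast hA
        linarith)
      (by
        have hsub : (A.card : ℝ) - (A.card : ℝ) = 0 := sub_self _
        rw [hsub, mul_zero, Real.rpow_zero, mul_one]
        exact_mod_cast Ek_le_card (by omega) A)
  -- basic log facts
  have hn2R : (2:ℝ) ≤ (A.card : ℝ) := by exact_mod_cast hA
  have hnpos : (0:ℝ) < (A.card : ℝ) := by linarith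
  set ℓ : ℝ := Real.log (A.card : ℝ) with hldef
  have hln : l2 ≤ ℓ := Real.log_le_log (by norm_num) hn2R
  have hlpos : 0 < ℓ := lt_of_lt_of_le hlog2 hln
  have hl3pos : 0 < ℓ^3 := by positivity
  have h3cast : ℓ ^ ((3:ℕ):ℝ) = ℓ^(3:ℕ) := Real.rpow_natCast ℓ 3
  have hrw3 : ℓ ^ ((3:ℝ)) = ℓ^(3:ℕ) := by
    rw [show (3:ℝ) = ((3:ℕ):ℝ) by norm_num, h3cast]
  have hrwneg : ℓ ^ (-(3:ℝ)) = (ℓ^(3:ℕ))⁻¹ := by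
    rw [Real.rpow_neg hlpos.le, hrw3]
  -- LL and lam upper bounds
  have hNatlog : (Nat.log 2 A.card : ℝ) * l2 ≤ ℓ := by
    have h1 : 2 ^ (Nat.log 2 A.card) ≤ A.card := Nat.pow_log_le_self 2 (by omega)
    have h2 : ((2:ℝ)) ^ (Nat.log 2 A.card) ≤ (A.card : ℝ) := by exact_mod_cast h1
    have h3 := Real.log_le_log (by positivity) h2
    rw [Real.log_pow] at h3
    exact h3
  have hLl : (LL A : ℝ) ≤ 3 * ℓ := by
    have hkey : ((Nat.log 2 A.card : ℝ) + 1) * l2 ≤ 2 * ℓ := by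
      have : 1 * l2 ≤ ℓ := by linarith [hln]
      nlinarith only [hNatlog, this]
    have h3l2 : (2:ℝ) ≤ 3 * l2 := by
      have := Real.log_two_gt_d9
      rw [hl2]
      linarith
    have hbig : ((Nat.log 2 A.card : ℝ) + 1) * l2 ≤ (3 * ℓ) * l2 := by
      have h5 : 2 * ℓ ≤ 3 * ℓ * l2 := by nlinarith only [h3l2, hlpos]
      linarith only [hkey, h5]
    have h6 : ((Nat.log 2 A.card : ℝ) + 1) ≤ 3 * ℓ := (mul_le_mul_iff_of_pos_right hlog2).mp hbig
    show ((Nat.log 2 A.card + 1 : ℕ) : ℝ) ≤ 3 * ℓ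
    push_cast
    exact h6
  have hlamUp : (lam k A : ℝ) ≤ c2 * ℓ^2 := by
    have h1 : (lam k A : ℝ) = 2^(k+3)*((k:ℝ)+4)*(LL A:ℝ)^2 := by
      show ((2^(k+3)*(k+4)*(LL A)^2 : ℕ):ℝ) = _
      push_cast
      ring
    have h2 : (LL A:ℝ)^2 ≤ (3*ℓ)^2 := pow_le_pow_left₀ (by positivity) hLl 2
    rw [h1, hc2def]
    calc 2^(k+3)*((k:ℝ)+4)*(LL A:ℝ)^2 ≤ 2^(k+3)*((k:ℝ)+4)*(3*ℓ)^2 :=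
          mul_le_mul_of_nonneg_left h2 (by positivity)
      _ = 9*2^(k+3)*((k:ℝ)+4)*ℓ^2 := by ring
  have hC1 : 3*(2:ℝ)^k*ℓ ≤ C*ℓ^3 := by
    rw [hCdef, div_mul_eq_mul_div, le_div_iff₀ (by positivity)]
    have q0 : l2^3 ≤ ℓ^2 := by
      have q0a : l2^3 ≤ l2^2 := by nlinarith only [hlog2, hlog2lt1]
      have q0b : l2^2 ≤ ℓ^2 := pow_le_pow_left₀ hlog2.le hln 2
      linarith only [q0a, q0b]
    have q1 : ℓ*l2^3 ≤ ℓ*ℓ^2 := mul_le_mul_of_nonneg_left q0 hlpos.le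
    have r1 := mul_le_mul_of_nonneg_left q1 (by positivity : (0:ℝ) ≤ 3*(2:ℝ)^k)
    have r2 : (0:ℝ) ≤ 32*c2*ℓ^3 := by positivity
    nlinarith only [r1, r2]
  have hC2 : 32*(lam k A:ℝ) ≤ C*ℓ^3 := by
    rw [hCdef, div_mul_eq_mul_div, le_div_iff₀ (by positivity)]
    have d1 : l2^3 ≤ ℓ := by
      have hll : (0:ℝ) < l2*l2 := mul_pos hlog2 hlog2
      have : l2^3 ≤ l2 := by nlinarith only [hlog2, hlog2lt1, hll]
      linarith only [this, hln]
    have p1 : (lam k A:ℝ)*l2^3 ≤ (c2*ℓ^2)*l2^3 :=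
      mul_le_mul_of_nonneg_right hlamUp (by positivity)
    have p2 : (c2*ℓ^2)*l2^3 ≤ (c2*ℓ^2)*ℓ := mul_le_mul_of_nonneg_left d1 (by positivity)
    have p3 : (0:ℝ) ≤ 3*(2:ℝ)^k*ℓ^3 := by positivity
    nlinarith only [p1, p2, p3]
  have hl3l : l2^3 ≤ ℓ^3 := pow_le_pow_left₀ hlog2.le hln 3
  refine ⟨Bf, B'', hB''Bf, hBfA, ((2^j : ℕ) : ℝ), ?_, ?_, ?_, ?_, ?_, ?_, ?_⟩
  · exact_mod_cast Nat.one_le_two_pow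
  · exact_mod_cast htBf
  · have h1 := mul_le_mul_of_nonneg_right hc_half hnpos.le
    linarith only [h1, hBfcard]
  · rw [hrwneg, ← div_eq_mul_inv, div_le_iff₀ hl3pos]
    have e1 : (Bf.card:ℝ) ≤ 2*c2*ℓ^2*(B''.card:ℝ) := by
      have r1 : (lam k A:ℝ)*(B''.card:ℝ) ≤ (c2*ℓ^2)*(B''.card:ℝ) :=
        mul_le_mul_of_nonneg_right hlamUp (by positivity)
      linarith only [hB''card, r1]
    have f1 : c * (Bf.card:ℝ) ≤ (l2/(2*c2)) * (Bf.card:ℝ) :=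
      mul_le_mul_of_nonneg_right hc_c2 (by positivity)
    have f2 : (l2/(2*c2)) * (Bf.card:ℝ) ≤ (l2/(2*c2)) * (2*c2*ℓ^2*(B''.card:ℝ)) :=
      mul_le_mul_of_nonneg_left e1 (by positivity)
    have f3 : (l2/(2*c2)) * (2*c2*ℓ^2*(B''.card:ℝ)) = l2*ℓ^2*(B''.card:ℝ) := by
      field_simp
    have f4 : l2*ℓ^2*(B''.card:ℝ) ≤ ℓ*ℓ^2*(B''.card:ℝ) := by
      have h5 := mul_le_mul_of_nonneg_right
        (mul_le_mul_of_nonneg_right hln (by positivity : (0:ℝ) ≤ ℓ^2))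
        (by positivity : (0:ℝ) ≤ (B''.card:ℝ))
      linarith only [h5]
    nlinarith only [f1, f2, f3.le, f3.ge, f4]
  · rw [hrwneg]
    have hElowR : ((popDiff Bf ((2^j:ℕ):ℝ)).card : ℝ) * ((2^j:ℕ):ℝ)^k ≤ (Ek k Bf : ℝ) := by
      exact_mod_cast hElow
    have hfac1 : c * (ℓ^3)⁻¹ ≤ 1 := by
      rw [← div_eq_mul_inv, div_le_one hl3pos]
      linarith only [hc_quarter, hl3l, hl3pos]
    have hW : (0:ℝ) ≤ ((popDiff Bf ((2^j:ℕ):ℝ)).card : ℝ) * ((2^j:ℕ):ℝ)^k := by positivity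
    have h5 := mul_le_mul_of_nonneg_right hfac1 hW
    nlinarith only [h5, hElowR]
  · rw [hrw3]
    have hW : (0:ℝ) ≤ ((popDiff Bf ((2^j:ℕ):ℝ)).card : ℝ) * ((2^j:ℕ):ℝ)^k := by positivity
    have g1 : (Ek k Bf:ℝ) ≤ 2^k*(3*ℓ)*(((popDiff Bf ((2^j:ℕ):ℝ)).card : ℝ) * ((2^j:ℕ):ℝ)^k) :=
      le_trans hEup (mul_le_mul_of_nonneg_right
        (mul_le_mul_of_nonneg_left hLl (by positivity)) hW)
    have g2 := mul_le_mul_of_nonneg_right hC1 hW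
    nlinarith only [g1, g2]
  · intro b hb
    obtain ⟨hmlow, hmup⟩ := hmem b hb
    have hWn : (0:ℝ) ≤ ((popDiff Bf ((2^j:ℕ):ℝ)).card : ℝ) * ((2^j:ℕ):ℝ) / (A.card:ℝ) := by
      positivity
    constructor
    · rw [hrwneg]
      have hfac4 : c * (ℓ^3)⁻¹ ≤ 1/4 := by
        rw [← div_eq_mul_inv, div_le_iff₀ hl3pos]
        linarith only [hc_quarter, hl3l]
      have h5 := mul_le_mul_of_nonneg_right hfac4 hWn
      have heq1 : c * (ℓ^3)⁻¹ * ((popDiff Bf ((2^j:ℕ):ℝ)).card : ℝ) * ((2^j:ℕ):ℝ) / (A.card:ℝ)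
          = (c * (ℓ^3)⁻¹) * (((popDiff Bf ((2^j:ℕ):ℝ)).card : ℝ) * ((2^j:ℕ):ℝ) / (A.card:ℝ)) := by
        ring
      have heq2 : ((popDiff Bf ((2^j:ℕ):ℝ)).card : ℝ) * ((2^j:ℕ):ℝ) / (4*(A.card:ℝ))
          = (1/4) * (((popDiff Bf ((2^j:ℕ):ℝ)).card : ℝ) * ((2^j:ℕ):ℝ) / (A.card:ℝ)) := by
        ring
      rw [heq1]
      rw [heq2] at hmlow
      linarith only [h5, hmlow]
    · rw [hrw3]
      have h5 := mul_le_mul_of_nonneg_right hC2 hWn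
      have heq3 : 32 * (lam k A : ℝ) * (((popDiff Bf ((2^j:ℕ):ℝ)).card : ℝ) * ((2^j:ℕ):ℝ)) / (A.card:ℝ)
          = (32 * (lam k A : ℝ)) * (((popDiff Bf ((2^j:ℕ):ℝ)).card : ℝ) * ((2^j:ℕ):ℝ) / (A.card:ℝ)) := by
        ring
      have heq4 : C * ℓ^(3:ℕ) * ((popDiff Bf ((2^j:ℕ):ℝ)).card : ℝ) * ((2^j:ℕ):ℝ) / (A.card:ℝ)
          = (C * ℓ^3) * (((popDiff Bf ((2^j:ℕ):ℝ)).card : ℝ) * ((2^j:ℕ):ℝ) / (A.card:ℝ)) := by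
        ring
      rw [heq4]
      rw [heq3] at hmup
      linarith only [h5, hmup]
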